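/- For every even n ≥ 2, the efficient domination number of P_n □ P_2 equals 2n − 1, i.e., the maximum number of vertices dominated by a 2-packing of P_n □ P_2 is 2n − 1. -/

import Mathlib

open SimpleGraph

/-- The closed neighborhood `N[v]` of a vertex. -/
def closedNbhd {V : Type*} (G : SimpleGraph V) (v : V) : Set V :=
  insert v (G.neighborSet v)

/-- `S` is an efficient dominating set: `|N[v] ∩ S| = 1` for every vertex `v`. -/
def isEDS {V : Type*} (G : SimpleGraph V) (S : Set V) : Prop :=
  ∀ v : V, ∃! u : V, u ∈ S ∧ u ∈ closedNbhd G v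

/-- `S` is a 2-packing: closed neighborhoods of distinct members are disjoint. -/
def twoPacking {V : Type*} (G : SimpleGraph V) (S : Set V) : Prop :=
  S.Pairwise fun u v => Disjoint (closedNbhd G u) (closedNbhd G v)

/-- The influence of `S`: the number of vertices dominated by `S`. -/
noncomputable def influence {V : Type*} (G : SimpleGraph V) (S : Set V) : ℕ :=
  (⋃ v ∈ S, closedNbhd G v).ncard

/-- The efficient domination number `F(G)`: maximum influence of a 2-packing. -/
noncomputable def effDomNum {V : Type*} (G : SimpleGraph V) : ℕ :=
  sSup {n | ∃ S : Set V, twoPacking G S ∧ influence G S = n}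

open Finset
open scoped Classical

/-! ### Auxiliary lemmas -/

lemma mem_cn {n : ℕ} (u v : Fin n × Fin 2) :
    v ∈ closedNbhd (pathGraph n □ pathGraph 2) u ↔
      v.1 = u.1 ∨ (v.2 = u.2 ∧ (v.1.val + 1 = u.1.val ∨ u.1.val + 1 = v.1.val)) := by
  simp only [closedNbhd, Set.mem_insert_iff, mem_neighborSet, boxProd_adj, pathGraph_adj]
  constructor
  · rintro (rfl | ⟨h, h2⟩ | ⟨h, h1⟩)
    · exact Or.inl rfl
    · exact Or.inr ⟨h2.symm, by omega⟩
    · exact Or.inl h1.symm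
  · rintro (h1 | ⟨h2, h⟩)
    · by_cases h2 : v.2 = u.2
      · left; exact Prod.ext h1 h2
      · right; right
        refine ⟨?_, h1.symm⟩
        have a := v.2.isLt; have b := u.2.isLt
        have : v.2.val ≠ u.2.val := fun hc => h2 (Fin.ext hc)
        omega
    · right; left; exact ⟨by omega, h2.symm⟩

/-- The weight function used in the parity argument. -/
def Wt (n a : ℕ) : ℤ := (n+1) + ((n:ℤ) - 1 - 2*a) * (-1)^a

lemma Wt_boundary {n : ℕ} (h2 : 2 ≤ n) (he : Even n) (m : ℕ) (hm : m < n) :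
    2 * Wt n m + (if m = 0 then 0 else Wt n (m-1)) + (if m = n-1 then 0 else Wt n (m+1))
      = 4*(n+1) := by
  rcases eq_or_ne m 0 with rfl | hm0
  · simp only [if_pos rfl, if_neg (by omega : (0:ℕ) ≠ n - 1), Wt]
    norm_num
    push_cast
    ring
  · rcases eq_or_ne m (n-1) with rfl | hmn
    · have hodd : Odd (n-1) := by
        obtain ⟨k, hk⟩ := he; exact ⟨k-1, by omega⟩
      have heven : Even (n-1-1) := by
        obtain ⟨k, hk⟩ := he; exact ⟨k-1, by omega⟩
      simp only [if_neg hm0, if_pos rfl, ite_true, Wt, hodd.neg_one_pow, heven.neg_one_pow]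
      have c1 : ((n - 1 : ℕ) : ℤ) = (n:ℤ) - 1 := by omega
      have c2 : ((n - 1 - 1 : ℕ) : ℤ) = (n:ℤ) - 2 := by omega
      rw [c1, c2]
      ring
    · have h1 : 1 ≤ m := by omega
      simp only [if_neg hm0, if_neg hmn, Wt]
      have e0 : ((-1:ℤ))^m = -(-1)^(m-1) := by
        conv_lhs => rw [show m = (m-1)+1 from by omega]
        rw [pow_succ]; ring
      have e1 : ((-1:ℤ))^(m-1) = -(-1)^m := by rw [e0]; ring
      have e2 : ((-1:ℤ))^(m+1) = -(-1)^m := by rw [pow_succ]; ring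
      rw [e1, e2]
      have c1 : ((m - 1 : ℕ) : ℤ) = (m:ℤ) - 1 := by omega
      rw [c1]
      push_cast
      ring

lemma colsum (n : ℕ) (W : ℕ → ℤ) (m : ℕ) (hm : m < n) :
    ∑ a ∈ Finset.range n,
        (if a = m then 2 * W a else if a + 1 = m ∨ m + 1 = a then W a else 0)
      = 2 * W m + (if m = 0 then 0 else W (m-1)) + (if m = n-1 then 0 else W (m+1)) := by
  have hsplit : ∀ a, (if a = m then 2 * W a else if a + 1 = m ∨ m + 1 = a then W a else 0)
      = (if a = m then 2 * W a else 0) + (if a + 1 = m then W a else 0)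
        + (if a = m + 1 then W a else 0) := by
    intro a
    split_ifs <;> first | ring1 | (exfalso; omega)
  simp only [hsplit]
  rw [Finset.sum_add_distrib, Finset.sum_add_distrib]
  congr 1
  · congr 1
    · rw [Finset.sum_ite_eq' (Finset.range n) m (fun a => 2 * W a), if_pos (by simpa using hm)]
    · rcases eq_or_ne m 0 with rfl | hm0
      · simp
      · rw [if_neg hm0]
        have : ∀ a, (if a + 1 = m then W a else 0) = (if a = m - 1 then W a else 0) := by
          intro a; congr 1; simp; omega
        simp only [this]
        rw [Finset.sum_ite_eq' (Finset.range n) (m-1) W, if_pos (by simp; omega)]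
  · rw [Finset.sum_ite_eq' (Finset.range n) (m+1) W]
    rcases eq_or_ne m (n-1) with rfl | hmn
    · rw [if_neg (by simp; omega), if_pos rfl]
    · rw [if_pos (by simp; omega), if_neg hmn]

lemma nbhd_sum {n : ℕ} (h2 : 2 ≤ n) (he : Even n) (u : Fin n × Fin 2) :
    ∑ v : Fin n × Fin 2,
        (if v ∈ closedNbhd (pathGraph n □ pathGraph 2) u then Wt n v.1.val else 0)
      = 4*(n+1) := by
  rw [Fintype.sum_prod_type]
  have inner : ∀ a : Fin n,
      (∑ b : Fin 2, if (a, b) ∈ closedNbhd (pathGraph n □ pathGraph 2) u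
          then Wt n a.val else 0)
        = (if a.val = u.1.val then 2 * Wt n a.val else
            if a.val + 1 = u.1.val ∨ u.1.val + 1 = a.val then Wt n a.val else 0) := by
    intro a
    simp only [mem_cn]
    obtain ⟨u1, u2⟩ := u
    simp only [Fin.sum_univ_two]
    by_cases h1 : a = u1
    · subst h1
      rw [if_pos (Or.inl rfl), if_pos (Or.inl rfl), if_pos rfl]
      ring
    · have h1' : a.val ≠ u1.val := fun hc => h1 (Fin.ext hc)
      simp only [if_neg h1']
      by_cases hc : a.val + 1 = u1.val ∨ u1.val + 1 = a.val
      · rw [if_pos hc]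
        fin_cases u2 <;> simp [h1, hc, Fin.ext_iff]
      · rw [if_neg hc]
        fin_cases u2 <;> simp [h1, hc, Fin.ext_iff]
  simp only [inner]
  rw [Fin.sum_univ_eq_sum_range (fun a => if a = u.1.val then 2 * Wt n a else
          if a + 1 = u.1.val ∨ u.1.val + 1 = a then Wt n a else 0) n]
  rw [colsum n (Wt n) u.1.val u.1.isLt, Wt_boundary h2 he u.1.val u.1.isLt]

lemma alt_sum (c : ℤ) (k : ℕ) :
    ∑ a ∈ Finset.range (2*k), (c - 2*(a:ℤ)) * (-1)^a = 2*k := by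
  induction k with
  | zero => simp
  | succ k ih =>
    have h1 : 2*(k+1) = (2*k) + 1 + 1 := by ring
    rw [h1, Finset.sum_range_succ, Finset.sum_range_succ, ih]
    have e1 : ((-1:ℤ))^(2*k) = 1 := by
      rw [pow_mul]; norm_num
    have e2 : ((-1:ℤ))^(2*k+1) = -1 := by
      rw [pow_succ, e1]; ring
    rw [e1, e2]
    push_cast
    ring

lemma total_sum {n : ℕ} (he : Even n) :
    ∑ v : Fin n × Fin 2, Wt n v.1.val = 2*n*(n+2) := by
  rw [Fintype.sum_prod_type]
  have inner : ∀ a : Fin n, (∑ _b : Fin 2, Wt n a.val) = 2 * Wt n a.val := by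
    intro a; simp [two_mul]
  simp only [inner]
  rw [Fin.sum_univ_eq_sum_range (fun a => 2 * Wt n a) n]
  have hW : ∑ a ∈ Finset.range n, 2 * Wt n a = 2 * ∑ a ∈ Finset.range n, Wt n a :=
    (Finset.mul_sum _ _ _).symm
  rw [hW]
  have hsum : ∑ a ∈ Finset.range n, Wt n a = n*((n:ℤ)+1) + n := by
    simp only [Wt]
    rw [Finset.sum_add_distrib, Finset.sum_const, Finset.card_range]
    obtain ⟨k, hk⟩ := he
    have hk2 : n = 2*k := by omega
    rw [hk2]
    push_cast
    rw [alt_sum (2*(k:ℤ) - 1) k]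
    ring
  rw [hsum]
  ring

lemma no_cover {n : ℕ} (h2 : 2 ≤ n) (he : Even n) (S : Set (Fin n × Fin 2))
    (hp : twoPacking (pathGraph n □ pathGraph 2) S)
    (hc : (⋃ v ∈ S, closedNbhd (pathGraph n □ pathGraph 2) v) = Set.univ) : False := by
  have hS : S.Finite := Set.toFinite S
  have hex : ∀ v : Fin n × Fin 2, ∃ u ∈ hS.toFinset,
      v ∈ closedNbhd (pathGraph n □ pathGraph 2) u := by
    intro v
    have hv : v ∈ ⋃ u ∈ S, closedNbhd (pathGraph n □ pathGraph 2) u := hc ▸ Set.mem_univ v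
    simpa [Set.mem_iUnion, Set.Finite.mem_toFinset] using hv
  have key : ∀ v : Fin n × Fin 2,
      ∑ u ∈ hS.toFinset,
        (if v ∈ closedNbhd (pathGraph n □ pathGraph 2) u then Wt n v.1.val else 0)
      = Wt n v.1.val := by
    intro v
    obtain ⟨u₀, hu₀, hv₀⟩ := hex v
    rw [Finset.sum_eq_single_of_mem u₀ hu₀]
    · rw [if_pos hv₀]
    · intro u hu hne
      rw [if_neg]
      intro hv
      have hd := hp (hS.mem_toFinset.mp hu) (hS.mem_toFinset.mp hu₀) hne
      exact Set.disjoint_left.mp hd hv hv₀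
  have calc1 : (2*(n:ℤ)*(n+2)) = (hS.toFinset.card : ℤ) * (4*(n+1)) := by
    calc (2*(n:ℤ)*(n+2)) = ∑ v : Fin n × Fin 2, Wt n v.1.val := (total_sum he).symm
    _ = ∑ v : Fin n × Fin 2, ∑ u ∈ hS.toFinset,
          (if v ∈ closedNbhd (pathGraph n □ pathGraph 2) u then Wt n v.1.val else 0) := by
        exact Finset.sum_congr rfl fun v _ => (key v).symm
    _ = ∑ u ∈ hS.toFinset, ∑ v : Fin n × Fin 2,
          (if v ∈ closedNbhd (pathGraph n □ pathGraph 2) u then Wt n v.1.val else 0) :=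
        Finset.sum_comm
    _ = ∑ u ∈ hS.toFinset, (4*((n:ℤ)+1)) :=
        Finset.sum_congr rfl fun u _ => nbhd_sum h2 he u
    _ = (hS.toFinset.card : ℤ) * (4*(n+1)) := by rw [Finset.sum_const]; ring
  set c : ℤ := (hS.toFinset.card : ℤ)
  have hcard' : (n:ℤ)*(n+2) = 2*c*((n:ℤ)+1) := by linarith
  have hdvd : ((n:ℤ)+1) ∣ 1 := ⟨((n:ℤ)+1) - 2*c, by linear_combination -hcard'⟩
  have hle : (n:ℤ)+1 ≤ 1 := Int.le_of_dvd one_pos hdvd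
  have : (2:ℤ) ≤ n := by exact_mod_cast h2
  linarith

/-! ### The zigzag construction -/

def Scode (n : ℕ) : Set (Fin n × Fin 2) :=
  {p | p.1.val % 2 = 0 ∧ p.2.val = (p.1.val / 2) % 2}

lemma Scode_pack {n : ℕ} : twoPacking (pathGraph n □ pathGraph 2) (Scode n) := by
  intro u hu v hv hne
  rw [Set.disjoint_left]
  intro x hxu hxv
  rw [mem_cn] at hxu hxv
  obtain ⟨hu1, hu2⟩ := hu
  obtain ⟨hv1, hv2⟩ := hv
  have hne' : ¬(u.1.val = v.1.val ∧ u.2.val = v.2.val) := by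
    rintro ⟨h1, h2⟩
    exact hne (Prod.ext (Fin.ext h1) (Fin.ext h2))
  have e1 : ∀ (p q : Fin n × Fin 2), p.1 = q.1 → p.1.val = q.1.val := fun p q h => by rw [h]
  have e2 : ∀ (p q : Fin n × Fin 2), p.2 = q.2 → p.2.val = q.2.val := fun p q h => by rw [h]
  rcases hxu with h | ⟨h2, h3⟩ <;> rcases hxv with g | ⟨g2, g3⟩
  · exact hne' (by have := e1 x u h; have := e1 x v g; omega)
  · have := e1 x u h; have := e2 x v g2; omega
  · have := e1 x v g; have := e2 x u h2; omega
  · have := e2 x u h2; have := e2 x v g2; omega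

lemma Scode_union {n : ℕ} (h2 : 2 ≤ n) (he : Even n) :
    (⋃ v ∈ Scode n, closedNbhd (pathGraph n □ pathGraph 2) v)
      = Set.univ \ {(⟨n-1, by omega⟩, ⟨1 - ((n-2)/2) % 2, by omega⟩)} := by
  ext x
  simp only [Set.mem_iUnion, Set.mem_diff, Set.mem_univ, Set.mem_singleton_iff, true_and]
  constructor
  · rintro ⟨u, ⟨hu1, hu2⟩, hmem⟩
    rw [mem_cn] at hmem
    intro hx
    have hx1 : x.1.val = n - 1 := by rw [hx]
    have hx2 : x.2.val = 1 - ((n-2)/2) % 2 := by rw [hx]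
    have hu1' : u.1.val < n := u.1.isLt
    obtain ⟨k, hk⟩ := he
    rcases hmem with h | ⟨h2', h3⟩
    · have : x.1.val = u.1.val := by rw [h]
      omega
    · have : x.2.val = u.2.val := by rw [h2']
      omega
  · intro hx
    have hx' : ¬(x.1.val = n - 1 ∧ x.2.val = 1 - ((n-2)/2) % 2) := by
      rintro ⟨ha, hb⟩
      exact hx (Prod.ext (Fin.ext ha) (Fin.ext hb))
    have hb2 : x.2.val < 2 := x.2.isLt
    have ha : x.1.val < n := x.1.isLt
    obtain ⟨k, hk⟩ := he
    rcases Nat.even_or_odd x.1.val with hpar | hpar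
    · obtain ⟨j, hj⟩ := hpar
      refine ⟨(x.1, ⟨(x.1.val/2) % 2, by omega⟩), ⟨?_, rfl⟩, ?_⟩
      · show x.1.val % 2 = 0
        omega
      · rw [mem_cn]; exact Or.inl rfl
    · obtain ⟨j, hj⟩ := hpar
      by_cases hrow : x.2.val = ((x.1.val - 1)/2) % 2
      · refine ⟨(⟨x.1.val - 1, by omega⟩, ⟨((x.1.val - 1)/2) % 2, by omega⟩), ⟨?_, rfl⟩, ?_⟩
        · show (x.1.val - 1) % 2 = 0
          omega
        · rw [mem_cn]
          right
          exact ⟨Fin.ext hrow, Or.inr (by show x.1.val - 1 + 1 = x.1.val; omega)⟩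
      · have hlt : x.1.val < n - 1 := by
          rcases eq_or_ne x.1.val (n-1) with h | h
          · exfalso; omega
          · omega
        refine ⟨(⟨x.1.val + 1, by omega⟩, ⟨((x.1.val + 1)/2) % 2, by omega⟩), ⟨?_, rfl⟩, ?_⟩
        · show (x.1.val + 1) % 2 = 0
          omega
        · rw [mem_cn]
          right
          refine ⟨Fin.ext ?_, Or.inl rfl⟩
          show x.2.val = ((x.1.val + 1)/2) % 2
          omega

theorem stmt5 (n : ℕ) (h2 : 2 ≤ n) (he : Even n) :
    effDomNum (pathGraph n □ pathGraph 2) = 2 * n - 1 := by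
  have hcard : Nat.card (Fin n × Fin 2) = 2 * n := by
    simp [Nat.card_eq_fintype_card]
    ring
  have hinfl : influence (pathGraph n □ pathGraph 2) (Scode n) = 2*n - 1 := by
    unfold influence
    rw [Scode_union h2 he,
      Set.ncard_diff_singleton_of_mem (Set.mem_univ _),
      Set.ncard_univ, hcard]
  have hmem : 2*n - 1 ∈ {m | ∃ S : Set (Fin n × Fin 2),
      twoPacking (pathGraph n □ pathGraph 2) S
        ∧ influence (pathGraph n □ pathGraph 2) S = m} :=
    ⟨Scode n, Scode_pack, hinfl⟩
  have hub : ∀ m ∈ {m | ∃ S : Set (Fin n × Fin 2),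
      twoPacking (pathGraph n □ pathGraph 2) S
        ∧ influence (pathGraph n □ pathGraph 2) S = m}, m ≤ 2*n - 1 := by
    rintro m ⟨S, hp, rfl⟩
    have hsub : (⋃ v ∈ S, closedNbhd (pathGraph n □ pathGraph 2) v) ⊆ Set.univ :=
      Set.subset_univ _
    rcases eq_or_ne (⋃ v ∈ S, closedNbhd (pathGraph n □ pathGraph 2) v) Set.univ with h | h
    · exact (no_cover h2 he S hp h).elim
    · have hlt : (⋃ v ∈ S, closedNbhd (pathGraph n □ pathGraph 2) v).ncard
          < (Set.univ : Set (Fin n × Fin 2)).ncard :=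
        Set.ncard_lt_ncard (hsub.ssubset_of_ne h) Set.finite_univ
      rw [Set.ncard_univ, hcard] at hlt
      unfold influence
      omega
  exact le_antisymm (csSup_le ⟨_, hmem⟩ hub) (le_csSup ⟨2*n - 1, hub⟩ hmem)
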